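/- Let A be an n×n real matrix and Q an n×n symmetric positive definite matrix. The map S ↦ (A S⁻¹ Aᵀ + Q)⁻¹ is matrix-concave on the set of symmetric positive definite n×n matrices: for all symmetric positive definite S₁, S₂ and α ∈ [0,1], (A (α S₁ + (1−α) S₂)⁻¹ Aᵀ + Q)⁻¹ ≥ α (A S₁⁻¹ Aᵀ + Q)⁻¹ + (1−α) (A S₂⁻¹ Aᵀ + Q)⁻¹. (Concavity of the inverse-covariance time-update map, used in Appendix C.) -/

import Mathlib

open Matrix

variable {n : ℕ}

private lemma symm_of_posDef {M : Matrix (Fin n) (Fin n) ℝ} (hM : M.PosDef) : Mᵀ = M := by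
  rw [← conjTranspose_eq_transpose_of_trivial]; exact hM.isHermitian

private lemma dot_symm (M : Matrix (Fin n) (Fin n) ℝ) (hM : Mᵀ = M) (a b : Fin n → ℝ) :
    a ⬝ᵥ (M *ᵥ b) = b ⬝ᵥ (M *ᵥ a) := by
  rw [dotProduct_mulVec, ← mulVec_transpose, hM, dotProduct_comm]

private lemma posDef_P (A Q S : Matrix (Fin n) (Fin n) ℝ) (hQ : Q.PosDef) (hS : S.PosDef) :
    (A * S⁻¹ * Aᵀ + Q).PosDef := by
  have h1 : (A * S⁻¹ * Aᵀ).PosSemidef := by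
    have := hS.inv.posSemidef.mul_mul_conjTranspose_same A
    rwa [conjTranspose_eq_transpose_of_trivial] at this
  exact Matrix.PosDef.posSemidef_add h1 hQ

private lemma expand_sq (M : Matrix (Fin n) (Fin n) ℝ) (a b : Fin n → ℝ) :
    (a - b) ⬝ᵥ (M *ᵥ (a - b)) =
      a ⬝ᵥ (M *ᵥ a) - a ⬝ᵥ (M *ᵥ b) - b ⬝ᵥ (M *ᵥ a) + b ⬝ᵥ (M *ᵥ b) := by
  rw [mulVec_sub, dotProduct_sub, sub_dotProduct, sub_dotProduct]
  ring

private lemma quad_nonneg {M : Matrix (Fin n) (Fin n) ℝ} (hM : M.PosSemidef) (x : Fin n → ℝ) :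
    0 ≤ x ⬝ᵥ (M *ᵥ x) := by simpa using hM.dotProduct_mulVec_nonneg x

/-- Completion-of-squares identity. -/
private lemma master (A Q S : Matrix (Fin n) (Fin n) ℝ) (hQ : Q.PosDef) (hS : S.PosDef)
    (x w : Fin n → ℝ) :
    w ⬝ᵥ (S *ᵥ w) + (x - A *ᵥ w) ⬝ᵥ (Q⁻¹ *ᵥ (x - A *ᵥ w)) =
      (w - S⁻¹ *ᵥ (Aᵀ *ᵥ ((A * S⁻¹ * Aᵀ + Q)⁻¹ *ᵥ x))) ⬝ᵥ
        (S *ᵥ (w - S⁻¹ *ᵥ (Aᵀ *ᵥ ((A * S⁻¹ * Aᵀ + Q)⁻¹ *ᵥ x)))) +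
      ((x - A *ᵥ w) - Q *ᵥ ((A * S⁻¹ * Aᵀ + Q)⁻¹ *ᵥ x)) ⬝ᵥ
        (Q⁻¹ *ᵥ ((x - A *ᵥ w) - Q *ᵥ ((A * S⁻¹ * Aᵀ + Q)⁻¹ *ᵥ x))) +
      x ⬝ᵥ ((A * S⁻¹ * Aᵀ + Q)⁻¹ *ᵥ x) := by
  set P := A * S⁻¹ * Aᵀ + Q with hPdef
  have hP : P.PosDef := posDef_P A Q S hQ hS
  set p := P⁻¹ *ᵥ x with hpdef
  set a := S⁻¹ *ᵥ (Aᵀ *ᵥ p) with hadef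
  set v := x - A *ᵥ w with hvdef
  -- basic inverse facts
  have hSdet : IsUnit S.det := (Matrix.isUnit_iff_isUnit_det S).1 hS.isUnit
  have hQdet : IsUnit Q.det := (Matrix.isUnit_iff_isUnit_det Q).1 hQ.isUnit
  have hPdet : IsUnit P.det := (Matrix.isUnit_iff_isUnit_det P).1 hP.isUnit
  have hSa : S *ᵥ a = Aᵀ *ᵥ p := by
    rw [hadef, mulVec_mulVec, Matrix.mul_nonsing_inv S hSdet, one_mulVec]
  have hQinvQ : Q⁻¹ *ᵥ (Q *ᵥ p) = p := by
    rw [mulVec_mulVec, Matrix.nonsing_inv_mul Q hQdet, one_mulVec]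
  have hPp : P *ᵥ p = x := by
    rw [hpdef, mulVec_mulVec, Matrix.mul_nonsing_inv P hPdet, one_mulVec]
  have hAa : A *ᵥ a = x - Q *ᵥ p := by
    rw [hadef, mulVec_mulVec, mulVec_mulVec, ← hPp, hPdef, add_mulVec]
    abel
  -- symmetric matrices
  have hSsymm : Sᵀ = S := symm_of_posDef hS
  have hQisymm : (Q⁻¹)ᵀ = Q⁻¹ := symm_of_posDef hQ.inv
  -- expand the two squares
  have e1 : (w - a) ⬝ᵥ (S *ᵥ (w - a)) =
      w ⬝ᵥ (S *ᵥ w) - 2 * ((A *ᵥ w) ⬝ᵥ p) + (x ⬝ᵥ p - (Q *ᵥ p) ⬝ᵥ p) := by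
    have c1 : w ⬝ᵥ (S *ᵥ a) = (A *ᵥ w) ⬝ᵥ p := by
      rw [hSa, dotProduct_mulVec, vecMul_transpose]
    have c2 : a ⬝ᵥ (S *ᵥ w) = (A *ᵥ w) ⬝ᵥ p := by rw [dot_symm S hSsymm, c1]
    have c3 : a ⬝ᵥ (S *ᵥ a) = x ⬝ᵥ p - (Q *ᵥ p) ⬝ᵥ p := by
      rw [hSa, dotProduct_mulVec, vecMul_transpose, hAa, sub_dotProduct]
    rw [expand_sq S w a, c1, c2, c3]
    ring
  have e2 : (v - Q *ᵥ p) ⬝ᵥ (Q⁻¹ *ᵥ (v - Q *ᵥ p)) =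
      v ⬝ᵥ (Q⁻¹ *ᵥ v) - 2 * (v ⬝ᵥ p) + (Q *ᵥ p) ⬝ᵥ p := by
    have c1 : v ⬝ᵥ (Q⁻¹ *ᵥ (Q *ᵥ p)) = v ⬝ᵥ p := by rw [hQinvQ]
    have c2 : (Q *ᵥ p) ⬝ᵥ (Q⁻¹ *ᵥ v) = v ⬝ᵥ p := by
      rw [dot_symm Q⁻¹ hQisymm, c1]
    have c3 : (Q *ᵥ p) ⬝ᵥ (Q⁻¹ *ᵥ (Q *ᵥ p)) = (Q *ᵥ p) ⬝ᵥ p := by rw [hQinvQ]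
    rw [expand_sq Q⁻¹ v (Q *ᵥ p), c1, c2, c3]
    ring
  have hv_p : v ⬝ᵥ p = x ⬝ᵥ p - (A *ᵥ w) ⬝ᵥ p := by
    rw [hvdef, sub_dotProduct]
  have hxp : x ⬝ᵥ (P⁻¹ *ᵥ x) = x ⬝ᵥ p := rfl
  rw [e1, e2, hxp, hv_p]
  ring

/-- The value at the optimal `w` equals the quadratic form of the inverse. -/
private lemma key_eq (A Q S : Matrix (Fin n) (Fin n) ℝ) (hQ : Q.PosDef) (hS : S.PosDef)
    (x : Fin n → ℝ) :
    x ⬝ᵥ ((A * S⁻¹ * Aᵀ + Q)⁻¹ *ᵥ x) =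
      (S⁻¹ *ᵥ (Aᵀ *ᵥ ((A * S⁻¹ * Aᵀ + Q)⁻¹ *ᵥ x))) ⬝ᵥ
        (S *ᵥ (S⁻¹ *ᵥ (Aᵀ *ᵥ ((A * S⁻¹ * Aᵀ + Q)⁻¹ *ᵥ x)))) +
      (x - A *ᵥ (S⁻¹ *ᵥ (Aᵀ *ᵥ ((A * S⁻¹ * Aᵀ + Q)⁻¹ *ᵥ x)))) ⬝ᵥ
        (Q⁻¹ *ᵥ (x - A *ᵥ (S⁻¹ *ᵥ (Aᵀ *ᵥ ((A * S⁻¹ * Aᵀ + Q)⁻¹ *ᵥ x))))) := by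
  set P := A * S⁻¹ * Aᵀ + Q with hPdef
  have hP : P.PosDef := posDef_P A Q S hQ hS
  set p := P⁻¹ *ᵥ x with hpdef
  set a := S⁻¹ *ᵥ (Aᵀ *ᵥ p) with hadef
  have hSdet : IsUnit S.det := (Matrix.isUnit_iff_isUnit_det S).1 hS.isUnit
  have hPdet : IsUnit P.det := (Matrix.isUnit_iff_isUnit_det P).1 hP.isUnit
  have hPp : P *ᵥ p = x := by
    rw [hpdef, mulVec_mulVec, Matrix.mul_nonsing_inv P hPdet, one_mulVec]
  have hAa : A *ᵥ a = x - Q *ᵥ p := by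
    rw [hadef, mulVec_mulVec, mulVec_mulVec, ← hPp, hPdef, add_mulVec]
    abel
  have h := master A Q S hQ hS x a
  rw [sub_self] at h
  have hu : x - A *ᵥ a - Q *ᵥ p = 0 := by rw [hAa]; abel
  rw [hu] at h
  simp only [mulVec_zero, dotProduct_zero, zero_dotProduct, zero_add] at h
  linarith [h]

/-- The lower bound for any `w`. -/
private lemma key_le (A Q S : Matrix (Fin n) (Fin n) ℝ) (hQ : Q.PosDef) (hS : S.PosDef)
    (x w : Fin n → ℝ) :
    x ⬝ᵥ ((A * S⁻¹ * Aᵀ + Q)⁻¹ *ᵥ x) ≤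
      w ⬝ᵥ (S *ᵥ w) + (x - A *ᵥ w) ⬝ᵥ (Q⁻¹ *ᵥ (x - A *ᵥ w)) := by
  have h := master A Q S hQ hS x w
  have h1 := quad_nonneg hS.posSemidef
    (w - S⁻¹ *ᵥ (Aᵀ *ᵥ ((A * S⁻¹ * Aᵀ + Q)⁻¹ *ᵥ x)))
  have h2 := quad_nonneg hQ.inv.posSemidef
    ((x - A *ᵥ w) - Q *ᵥ ((A * S⁻¹ * Aᵀ + Q)⁻¹ *ᵥ x))
  linarith

theorem time_update_inv_concave {n : ℕ} (A Q : Matrix (Fin n) (Fin n) ℝ)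
    (hQ : Q.PosDef)
    (S₁ S₂ : Matrix (Fin n) (Fin n) ℝ) (hS₁ : S₁.PosDef) (hS₂ : S₂.PosDef)
    (α : ℝ) (hα : α ∈ Set.Icc (0 : ℝ) 1) :
    ((A * (α • S₁ + (1 - α) • S₂)⁻¹ * Aᵀ + Q)⁻¹ -
      (α • (A * S₁⁻¹ * Aᵀ + Q)⁻¹ +
        (1 - α) • (A * S₂⁻¹ * Aᵀ + Q)⁻¹)).PosSemidef := by
  obtain ⟨hα0, hα1⟩ := hα
  have hα1' : (0:ℝ) ≤ 1 - α := by linarith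
  set M := α • S₁ + (1 - α) • S₂ with hMdef
  have hM : M.PosDef := by
    rw [posDef_iff_dotProduct_mulVec]
    constructor
    · rw [IsHermitian, conjTranspose_eq_transpose_of_trivial, hMdef, transpose_add,
        transpose_smul, transpose_smul, symm_of_posDef hS₁, symm_of_posDef hS₂]
    · intro x hx
      have h1 := hS₁.dotProduct_mulVec_pos hx
      have h2 := hS₂.dotProduct_mulVec_pos hx
      simp only [star_trivial] at h1 h2 ⊢
      rw [hMdef, add_mulVec, smul_mulVec, smul_mulVec, dotProduct_add,
        dotProduct_smul, dotProduct_smul, smul_eq_mul, smul_eq_mul]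
      rcases lt_or_eq_of_le hα0 with h | h
      · have : 0 ≤ (1 - α) * (x ⬝ᵥ (S₂ *ᵥ x)) := mul_nonneg hα1' h2.le
        nlinarith
      · rw [← h]; simpa using h2
  have hP : (A * M⁻¹ * Aᵀ + Q).PosDef := posDef_P A Q M hQ hM
  have hP₁ : (A * S₁⁻¹ * Aᵀ + Q).PosDef := posDef_P A Q S₁ hQ hS₁
  have hP₂ : (A * S₂⁻¹ * Aᵀ + Q).PosDef := posDef_P A Q S₂ hQ hS₂
  rw [posSemidef_iff_dotProduct_mulVec]
  constructor
  · rw [IsHermitian, conjTranspose_eq_transpose_of_trivial, transpose_sub, transpose_add,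
      transpose_smul, transpose_smul, symm_of_posDef hP.inv, symm_of_posDef hP₁.inv,
      symm_of_posDef hP₂.inv]
  · intro x
    simp only [star_trivial]
    rw [sub_mulVec, dotProduct_sub, add_mulVec, dotProduct_add, smul_mulVec,
      smul_mulVec, dotProduct_smul, dotProduct_smul, smul_eq_mul, smul_eq_mul,
      sub_nonneg]
    set w := M⁻¹ *ᵥ (Aᵀ *ᵥ ((A * M⁻¹ * Aᵀ + Q)⁻¹ *ᵥ x)) with hwdef
    have heq := key_eq A Q M hQ hM x
    have hMsplit : w ⬝ᵥ (M *ᵥ w) = α * (w ⬝ᵥ (S₁ *ᵥ w)) + (1 - α) * (w ⬝ᵥ (S₂ *ᵥ w)) := by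
      rw [hMdef, add_mulVec, smul_mulVec, smul_mulVec, dotProduct_add,
        dotProduct_smul, dotProduct_smul, smul_eq_mul, smul_eq_mul]
    have h1 := key_le A Q S₁ hQ hS₁ x w
    have h2 := key_le A Q S₂ hQ hS₂ x w
    rw [← hwdef] at heq
    nlinarith [heq, h1, h2, hMsplit]
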